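/- Let G be a finite group with a subgroup H such that H has an ordered generating system, gcd([G:H], |H|) = 1, and the index [G:H] is a power p^k of a prime p. Then G has an ordered generating system. -/

import Mathlib

/-- `(a, m)` is an *ordered generating system* of the group `G` if every `m k` is positive
and every `g : G` has a unique representation `g = a 0 ^ i 0 * a 1 ^ i 1 * ⋯ * a (n-1) ^ i (n-1)`
with `0 ≤ i k < m k` for all `k`. -/
def IsOGS {G : Type*} [Group G] {n : ℕ} (a : Fin n → G) (m : Fin n → ℕ) : Prop :=
  (∀ k, 0 < m k) ∧
    ∀ g : G, ∃! i : (k : Fin n) → Fin (m k),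
      g = (List.ofFn fun k => a k ^ ((i k : ℕ))).prod

/-- A group `G` has an ordered generating system if some tuple of elements together with
some bounds forms one. -/
def HasOGS (G : Type*) [Group G] : Prop :=
  ∃ (n : ℕ) (a : Fin n → G) (m : Fin n → ℕ), IsOGS a m

section Aux

open Function Subgroup

variable {G : Type*} [Group G]

/-- The product map associated to a candidate ordered generating system. -/
def ogsProd {n : ℕ} (a : Fin n → G) (m : Fin n → ℕ) (i : (k : Fin n) → Fin (m k)) : G :=
  (List.ofFn fun k => a k ^ ((i k : ℕ))).prod

theorem isOGS_iff_bijective {n : ℕ} (a : Fin n → G) (m : Fin n → ℕ) :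
    IsOGS a m ↔ (∀ k, 0 < m k) ∧ Bijective (ogsProd a m) := by
  unfold IsOGS ogsProd
  rw [Function.bijective_iff_existsUnique]
  simp_rw [eq_comm]

theorem hasOGS_of_bijective {n : ℕ} (a : Fin n → G) (m : Fin n → ℕ)
    (h : Bijective (ogsProd a m)) : HasOGS G := by
  refine ⟨n, a, m, (isOGS_iff_bijective a m).mpr ⟨?_, h⟩⟩
  intro k
  by_contra hk
  obtain ⟨i, -⟩ := h.surjective 1
  have hk0 : m k = 0 := Nat.le_zero.mp (not_lt.mp hk)
  exact (hk0 ▸ i k).elim0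

theorem HasOGS.exists_bijective (h : HasOGS G) :
    ∃ (n : ℕ) (a : Fin n → G) (m : Fin n → ℕ), Bijective (ogsProd a m) := by
  obtain ⟨n, a, m, hogs⟩ := h
  exact ⟨n, a, m, ((isOGS_iff_bijective a m).mp hogs).2⟩

theorem ogsProd_coe (H : Subgroup G) {n : ℕ} (b : Fin n → H) (m : Fin n → ℕ)
    (i : (k : Fin n) → Fin (m k)) :
    ((ogsProd b m i : H) : G) = ogsProd (fun k => (b k : G)) m i := by
  unfold ogsProd
  have h := map_list_prod H.subtype (List.ofFn fun k => b k ^ ((i k : ℕ)))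
  rw [List.map_ofFn] at h
  rw [show ((List.ofFn fun k => b k ^ ((i k : ℕ))).prod : G)
      = H.subtype (List.ofFn fun k => b k ^ ((i k : ℕ))).prod from rfl, h]
  exact congrArg List.prod (congrArg List.ofFn (funext fun t => by simp))

/-- The index equivalence for appending two systems. -/
def ogsAppendEquiv {n n' : ℕ} (m : Fin n → ℕ) (l : Fin n' → ℕ) :
    ((t : Fin (n + n')) → Fin (Fin.append m l t)) ≃
      (((k : Fin n) → Fin (m k)) × ((k : Fin n') → Fin (l k))) where
  toFun I :=
    (fun k => Fin.cast (Fin.append_left m l k) (I (Fin.castAdd n' k)),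
      fun k => Fin.cast (Fin.append_right m l k) (I (Fin.natAdd n k)))
  invFun q :=
    Fin.addCases (motive := fun t => Fin (Fin.append m l t))
      (fun k => Fin.cast (Fin.append_left m l k).symm (q.1 k))
      (fun k => Fin.cast (Fin.append_right m l k).symm (q.2 k))
  left_inv I := by
    funext t
    refine Fin.addCases (fun k => ?_) (fun k => ?_) t <;>
      · apply Fin.ext
        simp
  right_inv q := by
    refine Prod.ext ?_ ?_ <;>
      · funext k
        apply Fin.ext
        simp

theorem ogsProd_append (H : Subgroup G) {n n' : ℕ} (a : Fin n → G) (m : Fin n → ℕ)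
    (b : Fin n' → H) (l : Fin n' → ℕ)
    (I : (t : Fin (n + n')) → Fin (Fin.append m l t)) :
    ogsProd (Fin.append a fun k => (b k : G)) (Fin.append m l) I =
      ogsProd a m (ogsAppendEquiv m l I).1 *
        ((ogsProd b l (ogsAppendEquiv m l I).2 : H) : G) := by
  rw [ogsProd_coe]
  unfold ogsProd ogsAppendEquiv
  rw [List.ofFn_add, List.prod_append]
  congr 1
  · exact congrArg List.prod (congrArg List.ofFn (funext fun k => by
      simp [Fin.append_left]; rfl))
  · exact congrArg List.prod (congrArg List.ofFn (funext fun k => by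
      simp [Fin.append_right]))

/-- Combination lemma: if `H` has an OGS and the products over `(a, m)` form a left
transversal of `H` (expressed as bijectivity of the combined map), then `G` has an OGS. -/
theorem hasOGS_append (H : Subgroup G) {n n' : ℕ} (a : Fin n → G) (m : Fin n → ℕ)
    (b : Fin n' → H) (l : Fin n' → ℕ) (hb : Bijective (ogsProd b l))
    (hbij : Bijective fun q : (((k : Fin n) → Fin (m k)) × H) =>
      ogsProd a m q.1 * (q.2 : G)) : HasOGS G := by
  apply hasOGS_of_bijective (Fin.append a fun k => (b k : G)) (Fin.append m l)
  have key : ogsProd (Fin.append a fun k => (b k : G)) (Fin.append m l) =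
      (fun q : (((k : Fin n) → Fin (m k)) × H) => ogsProd a m q.1 * (q.2 : G)) ∘
        (Prod.map id (ogsProd b l)) ∘ (ogsAppendEquiv m l) := by
    funext I
    simpa using ogsProd_append H a m b l I
  rw [key]
  exact hbij.comp ((Function.bijective_id.prodMap hb).comp (ogsAppendEquiv m l).bijective)

theorem hasOGS_of_subsingleton [Subsingleton G] : HasOGS G := by
  apply hasOGS_of_bijective (n := 0) Fin.elim0 Fin.elim0
  constructor
  · intro i j _
    funext k
    exact k.elim0
  · intro g
    exact ⟨fun k => k.elim0, Subsingleton.elim _ _⟩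

theorem hasOGS_of_isCyclic [Finite G] [IsCyclic G] : HasOGS G := by
  obtain ⟨g, hg⟩ := IsCyclic.exists_generator (α := G)
  have horder : orderOf g = Nat.card G := orderOf_eq_card_of_forall_mem_zpowers hg
  apply hasOGS_of_bijective (fun _ : Fin 1 => g) (fun _ => Nat.card G)
  rw [Nat.bijective_iff_injective_and_card]
  constructor
  · intro i j hij
    have h1 : g ^ ((i 0 : ℕ)) = g ^ ((j 0 : ℕ)) := by
      simpa [ogsProd, List.ofFn_succ] using hij
    have h2 : (i 0 : ℕ) = (j 0 : ℕ) := by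
      refine pow_injOn_Iio_orderOf ?_ ?_ h1 <;>
        simp [Set.mem_Iio, horder, (i 0).isLt, (j 0).isLt]
    funext k
    have hk : k = 0 := Subsingleton.elim _ _
    subst hk
    exact Fin.ext h2
  · simp [Nat.card_pi]

theorem hasOGS_of_normal (N : Subgroup G) [hNn : N.Normal] (h1 : HasOGS N)
    (h2 : HasOGS (G ⧸ N)) : HasOGS G := by
  obtain ⟨n, abar, m, habar⟩ := h2.exists_bijective
  obtain ⟨n', b, l, hb⟩ := h1.exists_bijective
  set a : Fin n → G := fun k => (abar k).out with ha
  have hmk : ∀ i, QuotientGroup.mk (s := N) (ogsProd a m i) = ogsProd abar m i := by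
    intro i
    unfold ogsProd
    have h := map_list_prod (QuotientGroup.mk' N) (List.ofFn fun k => a k ^ ((i k : ℕ)))
    rw [List.map_ofFn] at h
    simp only [QuotientGroup.mk'_apply] at h
    rw [h]
    refine congrArg List.prod (congrArg List.ofFn (funext fun t => ?_))
    simp only [Function.comp_def, QuotientGroup.mk'_apply, QuotientGroup.mk_pow, ha,
      QuotientGroup.out_eq']
  apply hasOGS_append N a m b l hb
  constructor
  · rintro ⟨i, h⟩ ⟨i', h'⟩ heq
    simp only at heq
    have hq : ogsProd abar m i = ogsProd abar m i' := by
      have := congrArg (QuotientGroup.mk (s := N)) heq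
      simpa [hmk, QuotientGroup.eq_one_iff, h.2, h'.2] using this
    have hii : i = i' := habar.injective hq
    subst hii
    have : (h : G) = (h' : G) := mul_left_cancel heq
    exact Prod.ext rfl (Subtype.ext this)
  · intro g
    obtain ⟨i, hi⟩ := habar.surjective (QuotientGroup.mk g)
    have hmem : (ogsProd a m i)⁻¹ * g ∈ N := by
      rw [← QuotientGroup.eq]
      rw [hmk i, hi]
    exact ⟨⟨i, ⟨(ogsProd a m i)⁻¹ * g, hmem⟩⟩, by simp⟩

theorem hasOGS_of_isPGroup_aux {p : ℕ} (hp : p.Prime) :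
    ∀ (c : ℕ) (G : Type*) (_ : Group G) (_ : Finite G),
      Nat.card G = c → IsPGroup p G → HasOGS G := by
  intro c
  induction c using Nat.strong_induction_on with
  | _ c IH =>
    intro G _ _ hc hG
    rcases subsingleton_or_nontrivial G with hs | hn
    · exact hasOGS_of_subsingleton
    · haveI : Fact p.Prime := ⟨hp⟩
      haveI := hn
      haveI := hG.center_nontrivial
      obtain ⟨⟨g, hgc⟩, hne⟩ := exists_ne (1 : Subgroup.center G)
      have hg1 : g ≠ 1 := fun h => hne (Subtype.ext h)
      set N := Subgroup.zpowers g with hN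
      haveI hNn : N.Normal := by
        constructor
        intro x hx y
        have hxc : x ∈ Subgroup.center G := Subgroup.zpowers_le.mpr hgc hx
        rw [Subgroup.mem_center_iff.mp hxc y, mul_assoc, mul_inv_cancel, mul_one]
        exact hx
      haveI : IsCyclic N := by
        refine ⟨⟨⟨g, Subgroup.mem_zpowers g⟩, ?_⟩⟩
        rintro ⟨x, hx⟩
        obtain ⟨j, hj⟩ := hx
        exact ⟨j, Subtype.ext (by simpa using hj)⟩
      have hNcard : 1 < Nat.card N := by
        have : Nontrivial N := ⟨⟨⟨g, Subgroup.mem_zpowers g⟩, 1, fun h => hg1 (by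
          simpa using congrArg Subtype.val h)⟩⟩
        exact Finite.one_lt_card
      have hcardeq : Nat.card G = Nat.card (G ⧸ N) * Nat.card N :=
        Subgroup.card_eq_card_quotient_mul_card_subgroup N
      have hlt : Nat.card (G ⧸ N) < c := by
        rw [← hc, hcardeq]
        have hpos : 0 < Nat.card (G ⧸ N) := Nat.card_pos
        exact (Nat.lt_mul_iff_one_lt_right hpos).mpr hNcard
      have hQ : HasOGS (G ⧸ N) :=
        IH _ hlt (G ⧸ N) inferInstance inferInstance rfl (hG.to_quotient N)
      have hNogs : HasOGS N := hasOGS_of_isCyclic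
      exact hasOGS_of_normal N hNogs hQ

theorem hasOGS_of_isPGroup {p : ℕ} (hp : p.Prime) (G : Type*) [Group G] [Finite G]
    (hG : IsPGroup p G) : HasOGS G :=
  hasOGS_of_isPGroup_aux hp (Nat.card G) G inferInstance inferInstance rfl hG

end Aux

theorem hasOGS_of_prime_power_index {G : Type*} [Group G] [Fintype G]
    (H : Subgroup G) (hH : HasOGS H)
    (hcop : Nat.Coprime H.index (Nat.card H))
    (p k : ℕ) (hp : p.Prime) (hidx : H.index = p ^ k) :
    HasOGS G := by
  haveI : Fact p.Prime := ⟨hp⟩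
  have hdvd : p ^ k ∣ Nat.card G :=
    ⟨Nat.card H, by rw [← H.card_mul_index, hidx, mul_comm]⟩
  obtain ⟨P, hP⟩ := Sylow.exists_subgroup_card_pow_prime p hdvd
  have hPg : IsPGroup p P := IsPGroup.of_card hP
  obtain ⟨n, b, m, hb⟩ := (hasOGS_of_isPGroup hp P hPg).exists_bijective
  obtain ⟨n', bH, lH, hbH⟩ := hH.exists_bijective
  have hPH : P ⊓ H = ⊥ := Subgroup.inf_eq_bot_of_coprime (by rw [hP, ← hidx]; exact hcop)
  apply hasOGS_append H (fun t => (b t : G)) m bH lH hbH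
  rw [Nat.bijective_iff_injective_and_card]
  constructor
  · rintro ⟨i, h⟩ ⟨i', h'⟩ heq
    simp only [← ogsProd_coe] at heq
    set x : G := ((ogsProd b m i : P) : G) with hxdef
    set x' : G := ((ogsProd b m i' : P) : G) with hx'def
    have hmem : x'⁻¹ * x ∈ P ⊓ H := by
      refine ⟨P.mul_mem (P.inv_mem (ogsProd b m i').2) (ogsProd b m i).2, ?_⟩
      have hxx : x'⁻¹ * x = (h' : G) * (h : G)⁻¹ := by
        rw [inv_mul_eq_iff_eq_mul, ← mul_assoc, ← heq, mul_inv_cancel_right]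
      rw [hxx]
      exact H.mul_mem h'.2 (H.inv_mem h.2)
    rw [hPH, Subgroup.mem_bot, inv_mul_eq_one] at hmem
    have hbi : ogsProd b m i = ogsProd b m i' := Subtype.ext hmem.symm
    have hii : i = i' := hb.injective hbi
    subst hii
    have hxx' : x = x' := hmem.symm
    have hh : (h : G) = (h' : G) := by
      apply mul_left_cancel (a := x)
      rw [heq, hxx']
    exact Prod.ext rfl (Subtype.ext hh)
  · have h1 : Nat.card ((k : Fin n) → Fin (m k)) = Nat.card P :=
      Nat.card_eq_of_bijective _ hb
    rw [Nat.card_prod, h1, hP, ← hidx, mul_comm, H.card_mul_index]
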